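/- Let α and β be finite index types and let σ, τ : Matrix (α × β) (α × β) ℂ be density matrices such that: (1) Tr₂(τ) = Tr₂(σ), Tr₁(τ) = Tr₁(σ), both Tr₂(σ) and Tr₁(σ) are diagonal matrices, and in each of these two diagonal matrices the diagonal entries are real and pairwise distinct (no eigenvalue is degenerate); (2) there exist unitary matrices U : Matrix α α ℂ and V : Matrix β β ℂ with τ = (U ⊗ V) * σ * (U ⊗ V)ᴴ. Then the entries of σ and τ have equal moduli: |τ (i,k) (j,l)| = |σ (i,k) (j,l)| for all i, j : α and k, l : β. -/

import Mathlib

open Matrix Kronecker ComplexOrder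

/-- Partial trace over the second tensor factor. -/
noncomputable def ptrace2 {α β : Type*} [Fintype β]
    (M : Matrix (α × β) (α × β) ℂ) : Matrix α α ℂ :=
  Matrix.of fun i j => ∑ k : β, M (i, k) (j, k)

/-- Partial trace over the first tensor factor. -/
noncomputable def ptrace1 {α β : Type*} [Fintype α]
    (M : Matrix (α × β) (α × β) ℂ) : Matrix β β ℂ :=
  Matrix.of fun i j => ∑ k : α, M (k, i) (k, j)

lemma ptrace2_conj {α β : Type*} [Fintype α] [Fintype β] [DecidableEq β]
    (U : Matrix α α ℂ) (V : Matrix β β ℂ) (hV : Vᴴ * V = 1)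
    (σ : Matrix (α × β) (α × β) ℂ) :
    ptrace2 ((U ⊗ₖ V) * σ * (U ⊗ₖ V)ᴴ) = U * ptrace2 σ * Uᴴ := by
  have hVo : ∀ q s : β, ∑ k, V k q * star (V k s) = if q = s then 1 else 0 := by
    intro q s
    have h := congrFun (congrFun hV s) q
    simp only [Matrix.mul_apply, Matrix.conjTranspose_apply, Matrix.one_apply] at h
    rw [show (∑ k, V k q * star (V k s)) = ∑ k, star (V k s) * V k q from
      Finset.sum_congr rfl fun k _ => mul_comm _ _, h]
    by_cases hqs : q = s
    · simp [hqs]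
    · simp [hqs, Ne.symm hqs]
  ext i j
  simp only [ptrace2, of_apply, Matrix.mul_apply, Matrix.conjTranspose_apply,
    Matrix.kroneckerMap_apply, star_mul']
  calc ∑ k : β, ∑ r : α × β, (∑ p : α × β, U i p.1 * V k p.2 * σ p r) *
          (star (U j r.1) * star (V k r.2))
      = ∑ r : α × β, ∑ p : α × β,
          (U i p.1 * σ p r * star (U j r.1)) * ∑ k : β, V k p.2 * star (V k r.2) := by
        rw [Finset.sum_comm]
        refine Finset.sum_congr rfl fun r _ => ?_
        simp only [Finset.sum_mul]
        rw [Finset.sum_comm]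
        refine Finset.sum_congr rfl fun p _ => ?_
        rw [Finset.mul_sum]
        refine Finset.sum_congr rfl fun k _ => ?_
        ring
    _ = ∑ r : α × β, ∑ p : α × β,
          (U i p.1 * σ p r * star (U j r.1)) * (if p.2 = r.2 then 1 else 0) := by
        simp only [hVo]
    _ = ∑ x : α, (∑ x_1 : α, U i x_1 * ∑ k : β, σ (x_1, k) (x, k)) * star (U j x) := by
        simp only [mul_ite, mul_one, mul_zero, Fintype.sum_prod_type,
          Finset.sum_ite_eq, Finset.sum_ite_eq', Finset.mem_univ, if_true,
          Finset.mul_sum, Finset.sum_mul]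
        refine Finset.sum_congr rfl fun r1 _ => ?_
        rw [Finset.sum_comm]

lemma ptrace1_conj {α β : Type*} [Fintype α] [Fintype β] [DecidableEq α]
    (U : Matrix α α ℂ) (V : Matrix β β ℂ) (hU : Uᴴ * U = 1)
    (σ : Matrix (α × β) (α × β) ℂ) :
    ptrace1 ((U ⊗ₖ V) * σ * (U ⊗ₖ V)ᴴ) = V * ptrace1 σ * Vᴴ := by
  have hUo : ∀ q s : α, ∑ k, U k q * star (U k s) = if q = s then 1 else 0 := by
    intro q s
    have h := congrFun (congrFun hU s) q
    simp only [Matrix.mul_apply, Matrix.conjTranspose_apply, Matrix.one_apply] at h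
    rw [show (∑ k, U k q * star (U k s)) = ∑ k, star (U k s) * U k q from
      Finset.sum_congr rfl fun k _ => mul_comm _ _, h]
    by_cases hqs : q = s
    · simp [hqs]
    · simp [hqs, Ne.symm hqs]
  ext i j
  simp only [ptrace1, of_apply, Matrix.mul_apply, Matrix.conjTranspose_apply,
    Matrix.kroneckerMap_apply, star_mul']
  calc ∑ k : α, ∑ r : α × β, (∑ p : α × β, U k p.1 * V i p.2 * σ p r) *
          (star (U k r.1) * star (V j r.2))
      = ∑ r : α × β, ∑ p : α × β,
          (V i p.2 * σ p r * star (V j r.2)) * ∑ k : α, U k p.1 * star (U k r.1) := by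
        rw [Finset.sum_comm]
        refine Finset.sum_congr rfl fun r _ => ?_
        simp only [Finset.sum_mul]
        rw [Finset.sum_comm]
        refine Finset.sum_congr rfl fun p _ => ?_
        rw [Finset.mul_sum]
        refine Finset.sum_congr rfl fun k _ => ?_
        ring
    _ = ∑ r : α × β, ∑ p : α × β,
          (V i p.2 * σ p r * star (V j r.2)) * (if p.1 = r.1 then 1 else 0) := by
        simp only [hUo]
    _ = ∑ x : β, (∑ x_1 : β, V i x_1 * ∑ k : α, σ (k, x_1) (k, x)) * star (V j x) := by
        simp only [mul_ite, mul_one, mul_zero, Fintype.sum_prod_type,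
          Finset.sum_ite_eq, Finset.sum_ite_eq', Finset.mem_univ, if_true,
          Finset.mul_sum, Finset.sum_mul]
        rw [Finset.sum_comm]
        refine Finset.sum_congr rfl fun r2 _ => ?_
        calc (∑ x : α, ∑ x_1 : α, ∑ x_2 : β,
                if x_1 = x then V i x_2 * σ (x_1, x_2) (x, r2) * star (V j r2) else 0)
            = ∑ x : α, ∑ x_2 : β, V i x_2 * σ (x, x_2) (x, r2) * star (V j r2) := by
              refine Finset.sum_congr rfl fun x _ => ?_
              rw [Finset.sum_comm]
              simp only [Finset.sum_ite_eq', Finset.mem_univ, if_true]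
          _ = _ := Finset.sum_comm

lemma commute_diag_offdiag {α : Type*} [Fintype α] [DecidableEq α]
    (U D : Matrix α α ℂ) (hD : D.IsDiag) (hUD : U * D = D * U)
    (hnd : ∀ i j, i ≠ j → D i i ≠ D j j) : ∀ i j, i ≠ j → U i j = 0 := by
  intro i j hij
  have h := congrFun (congrFun hUD i) j
  have h1 : (U * D) i j = U i j * D j j := by
    rw [Matrix.mul_apply]
    refine Finset.sum_eq_single j (fun p _ hp => ?_) (by simp)
    rw [hD hp, mul_zero]
  have h2 : (D * U) i j = D i i * U i j := by
    rw [Matrix.mul_apply]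
    refine Finset.sum_eq_single i (fun p _ hp => ?_) (by simp)
    rw [hD (Ne.symm hp), zero_mul]
  rw [h1, h2] at h
  have hne : D j j - D i i ≠ 0 := sub_ne_zero.mpr (Ne.symm (hnd i j hij))
  have : U i j * (D j j - D i i) = 0 := by ring_nf; linear_combination h
  rcases mul_eq_zero.mp this with h' | h'
  · exact h'
  · exact absurd h' hne

lemma unitary_diag_abs {α : Type*} [Fintype α] [DecidableEq α]
    (U : Matrix α α ℂ) (hU : Uᴴ * U = 1) (hoff : ∀ i j, i ≠ j → U i j = 0) :
    ∀ i, ‖U i i‖ = 1 := by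
  intro i
  have h := congrFun (congrFun hU i) i
  simp only [Matrix.mul_apply, Matrix.conjTranspose_apply, Matrix.one_apply_eq] at h
  have hs : ∑ x : α, star (U x i) * U x i = star (U i i) * U i i :=
    Finset.sum_eq_single i (fun p _ hp => by rw [hoff p i hp]; simp)
      (fun hh => absurd (Finset.mem_univ i) hh)
  have h2 : star (U i i) * U i i = 1 := by rw [← hs]; exact h
  have h3 := congrArg (fun z : ℂ => ‖z‖) h2
  simp only [Complex.star_def, norm_mul, norm_one, Complex.norm_conj] at h3
  nlinarith [norm_nonneg (U i i)]

/-- If two density matrices with equal, diagonal, nondegenerate partial traces are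
related by a local unitary `U ⊗ V`, then their entries have equal moduli. -/
theorem local_unitary_equiv_entry_moduli {α β : Type*}
    [Fintype α] [Fintype β] [DecidableEq α] [DecidableEq β]
    (σ τ : Matrix (α × β) (α × β) ℂ)
    (hσ : σ.PosSemidef) (hσtr : σ.trace = 1)
    (hτ : τ.PosSemidef) (hτtr : τ.trace = 1)
    (heq2 : ptrace2 τ = ptrace2 σ) (heq1 : ptrace1 τ = ptrace1 σ)
    (hdiag2 : (ptrace2 σ).IsDiag) (hdiag1 : (ptrace1 σ).IsDiag)
    (hre2 : ∀ i, ((ptrace2 σ) i i).im = 0) (hre1 : ∀ k, ((ptrace1 σ) k k).im = 0)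
    (hnd2 : ∀ i j, i ≠ j → (ptrace2 σ) i i ≠ (ptrace2 σ) j j)
    (hnd1 : ∀ k l, k ≠ l → (ptrace1 σ) k k ≠ (ptrace1 σ) l l)
    (U : Matrix α α ℂ) (V : Matrix β β ℂ)
    (hU : Uᴴ * U = 1) (hU' : U * Uᴴ = 1) (hV : Vᴴ * V = 1) (hV' : V * Vᴴ = 1)
    (hτσ : τ = (U ⊗ₖ V) * σ * (U ⊗ₖ V)ᴴ) :
    ∀ (i j : α) (k l : β),
      ‖τ (i, k) (j, l)‖ = ‖σ (i, k) (j, l)‖ := by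
  have hD2 : U * ptrace2 σ * Uᴴ = ptrace2 σ := by
    rw [← ptrace2_conj U V hV σ, ← hτσ]; exact heq2
  have hD1 : V * ptrace1 σ * Vᴴ = ptrace1 σ := by
    rw [← ptrace1_conj U V hU σ, ← hτσ]; exact heq1
  have hUD : U * ptrace2 σ = ptrace2 σ * U := by
    have h := congrArg (fun M => M * U) hD2
    simpa [Matrix.mul_assoc, hU] using h
  have hVD : V * ptrace1 σ = ptrace1 σ * V := by
    have h := congrArg (fun M => M * V) hD1
    simpa [Matrix.mul_assoc, hV] using h
  have hUoff := commute_diag_offdiag U (ptrace2 σ) hdiag2 hUD hnd2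
  have hVoff := commute_diag_offdiag V (ptrace1 σ) hdiag1 hVD hnd1
  have hUabs := unitary_diag_abs U hU hUoff
  have hVabs := unitary_diag_abs V hV hVoff
  have hUVdiag : U ⊗ₖ V = Matrix.diagonal (fun p : α × β => U p.1 p.1 * V p.2 p.2) := by
    ext ⟨i, k⟩ ⟨j, l⟩
    rcases eq_or_ne i j with rfl | hij
    · rcases eq_or_ne k l with rfl | hkl
      · simp [Matrix.kroneckerMap_apply]
      · simp [Matrix.kroneckerMap_apply, hVoff k l hkl,
          Matrix.diagonal_apply_ne _ (by simp [hkl] : ((i, k) : α × β) ≠ (i, l))]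
    · simp [Matrix.kroneckerMap_apply, hUoff i j hij,
        Matrix.diagonal_apply_ne _ (by simp [hij] : ((i, k) : α × β) ≠ (j, l))]
  intro i j k l
  rw [hτσ, hUVdiag, Matrix.diagonal_conjTranspose, Matrix.mul_diagonal,
    Matrix.diagonal_mul]
  simp only [Pi.star_apply, star_mul']
  simp only [norm_mul, Complex.star_def, Complex.norm_conj, hUabs, hVabs, one_mul, mul_one]
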